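/- Let (X,Y) be a pair of L²(I)-valued random variables with E‖X‖² < ∞ and E‖Y‖² < ∞ satisfying the functional linear model E(Y|X)(s) = E{Y(s)} + ∫_I b(s,t)[X(t)−E{X(t)}]dt with b ∈ L²(I²). Let K(s,t)=Cov{X(s),X(t)} have spectral expansion K = Σ_k κ_k φ_k⊗φ_k with κ_k>0 and {φ_k} an orthonormal basis of L²(I) of eigenfunctions, set ξ_k = ⟨X−E[X],φ_k⟩ and b_{j,k} = ∬ b·(φ_j⊗φ_k). Then for every k: the Bochner expectation E[ξ_k Y] ∈ L²(I) equals κ_k Σ_{j≥1} b_{j,k} φ_j (the series converging in L²(I)); consequently b = Σ_{k≥1} κ_k^{−1} E[ξ_k Y] ⊗ φ_k in L²(I²). -/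

import Mathlib

open MeasureTheory Filter

noncomputable section

/-- Lebesgue measure on the unit interval `I = [0,1]`. -/
def μI : Measure ℝ := MeasureTheory.volume.restrict (Set.Icc 0 1)

/-- The `L²(I)` inner product `⟨f, g⟩ = ∫_I f g`. -/
def ip (f g : ℝ → ℝ) : ℝ := ∫ t, f t * g t ∂μI

instance : IsProbabilityMeasure μI := ⟨by simp [μI, Real.volume_Icc]⟩

namespace CoefAux

lemma ip_def (f g : ℝ → ℝ) : ip f g = ∫ t, f t * g t ∂μI := rfl

variable {α : Type*} {mα : MeasurableSpace α} {μ : Measure α} {f g : α → ℝ}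

lemma integrable_mul₂ (hf : MemLp f 2 μ) (hg : MemLp g 2 μ) :
    Integrable (fun x => f x * g x) μ := by
  have hbd : Integrable (fun x => (f x ^ 2 + g x ^ 2) / 2) μ :=
    (hf.integrable_sq.add hg.integrable_sq).div_const 2
  refine Integrable.mono' hbd (hf.1.mul hg.1) (ae_of_all _ fun x => ?_)
  rw [Real.norm_eq_abs, abs_mul]
  nlinarith [sq_nonneg (|f x| - |g x|), sq_abs (f x), sq_abs (g x), abs_nonneg (f x),
    abs_nonneg (g x)]


lemma integral_abs_mul_le (hf : MemLp f 2 μ) (hg : MemLp g 2 μ) :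
    ∫ x, |f x * g x| ∂μ ≤
      Real.sqrt (∫ x, (f x) ^ 2 ∂μ) * Real.sqrt (∫ x, (g x) ^ 2 ∂μ) := by
  have hint : Integrable (fun x => |f x * g x|) μ := (integrable_mul₂ hf hg).abs
  set I := ∫ x, |f x * g x| ∂μ with hI
  set A := ∫ x, (f x) ^ 2 ∂μ with hA
  set B := ∫ x, (g x) ^ 2 ∂μ with hB
  have hA0 : 0 ≤ A := integral_nonneg fun x => sq_nonneg _
  have hB0 : 0 ≤ B := integral_nonneg fun x => sq_nonneg _
  have hI0 : 0 ≤ I := integral_nonneg fun x => abs_nonneg _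
  have key : ∀ c : ℝ, 2 * c * I ≤ c ^ 2 * A + B := by
    intro c
    have h0 : 0 ≤ ∫ x, (c * |f x| - |g x|) ^ 2 ∂μ :=
      integral_nonneg fun x => sq_nonneg _
    have hexp : (fun x => (c * |f x| - |g x|) ^ 2)
        = fun x => c ^ 2 * (f x) ^ 2 - 2 * c * |f x * g x| + (g x) ^ 2 := by
      funext x
      rw [abs_mul, sub_sq, mul_pow, sq_abs, sq_abs]
      ring
    rw [hexp] at h0
    have h1 : Integrable (fun x => c ^ 2 * (f x) ^ 2) μ := (hf.integrable_sq).const_mul _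
    have h2 : Integrable (fun x => 2 * c * |f x * g x|) μ := hint.const_mul _
    have h3 : Integrable (fun x => c ^ 2 * (f x) ^ 2 - 2 * c * |f x * g x|) μ := h1.sub h2
    rw [integral_add h3 hg.integrable_sq, integral_sub h1 h2,
      integral_const_mul, integral_const_mul] at h0
    linarith
  rcases eq_or_lt_of_le hA0 with h | hApos
  · have hIle : I ≤ 0 := by
      by_contra hc
      push_neg at hc
      have := key ((B + 1) / I)
      rw [← h] at this
      have h2 : 2 * ((B + 1) / I) * I = 2 * (B + 1) := by field_simp
      rw [h2] at this
      nlinarith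
    calc I ≤ 0 := hIle
    _ ≤ _ := mul_nonneg (Real.sqrt_nonneg _) (Real.sqrt_nonneg _)
  · rcases eq_or_lt_of_le hB0 with h | hBpos
    · have hIle : I ≤ 0 := by
        by_contra hc
        push_neg at hc
        have := key (I / A)
        rw [← h] at this
        have h2 : (I / A) ^ 2 * A = I ^ 2 / A := by field_simp
        rw [h2] at this
        have h3 : 2 * (I / A) * I = 2 * I ^ 2 / A := by field_simp
        rw [h3] at this
        have h5 : 0 < I ^ 2 / A := div_pos (by positivity) hApos
        have h6 : 2 * I ^ 2 / A = I ^ 2 / A + I ^ 2 / A := by ring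
        linarith
      calc I ≤ 0 := hIle
      _ ≤ _ := mul_nonneg (Real.sqrt_nonneg _) (Real.sqrt_nonneg _)
    · set sA := Real.sqrt A with hsA
      set sB := Real.sqrt B with hsB
      have hsA0 : 0 < sA := Real.sqrt_pos.mpr hApos
      have hsB0 : 0 < sB := Real.sqrt_pos.mpr hBpos
      have hsA2 : sA ^ 2 = A := Real.sq_sqrt hA0
      have hsB2 : sB ^ 2 = B := Real.sq_sqrt hB0
      have := key (sB / sA)
      have h2 : (sB / sA) ^ 2 * A = B := by
        rw [div_pow, hsA2, hsB2]; field_simp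
      rw [h2] at this
      have h3 : 2 * (sB / sA) * I = 2 * sB * I / sA := by ring
      rw [h3] at this
      -- 2 sB I / sA ≤ 2 B = 2 sB², so I ≤ sA sB
      have h4 : 2 * sB * I ≤ 2 * B * sA := by
        rw [div_le_iff₀ hsA0] at this
        linarith
      nlinarith


lemma integral_mul_le (hf : MemLp f 2 μ) (hg : MemLp g 2 μ) :
    |∫ x, f x * g x ∂μ| ≤
      Real.sqrt (∫ x, (f x) ^ 2 ∂μ) * Real.sqrt (∫ x, (g x) ^ 2 ∂μ) := by
  refine le_trans ?_ (integral_abs_mul_le hf hg)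
  simpa only [Real.norm_eq_abs] using norm_integral_le_integral_norm (fun x => f x * g x)


variable {φ : ℕ → ℝ → ℝ} {f : ℝ → ℝ}

lemma parseval_partial (hφL2 : ∀ k, MemLp (φ k) 2 μI)
    (hφon : ∀ j k, ip (φ j) (φ k) = if j = k then 1 else 0)
    (hf : MemLp f 2 μI) (N : ℕ) :
    ∫ s, (f s - ∑ j ∈ Finset.range N, ip f (φ j) * φ j s) ^ 2 ∂μI
      = (∫ s, f s ^ 2 ∂μI) - ∑ j ∈ Finset.range N, (ip f (φ j)) ^ 2 := by
  set c : ℕ → ℝ := fun j => ip f (φ j) with hc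
  set S : ℝ → ℝ := fun s => ∑ j ∈ Finset.range N, c j * φ j s with hS
  have hSL2 : MemLp S 2 μI := by
    apply memLp_finset_sum (Finset.range N) (f := fun j s => c j * φ j s)
    exact fun j _ => (hφL2 j).const_mul (c j)
  have hfS : Integrable (fun s => f s * S s) μI := integrable_mul₂ hf hSL2
  have hSS : Integrable (fun s => S s * S s) μI := integrable_mul₂ hSL2 hSL2
  have hexp : (fun s => (f s - S s) ^ 2)
      = fun s => f s ^ 2 - 2 * (f s * S s) + S s * S s := by
    funext s; ring
  have h1 : Integrable (fun s => f s ^ 2 - 2 * (f s * S s)) μI :=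
    hf.integrable_sq.sub (hfS.const_mul 2)
  have hIfS : ∫ s, f s * S s ∂μI = ∑ j ∈ Finset.range N, c j ^ 2 := by
    have h2 : (fun s => f s * S s)
        = fun s => ∑ j ∈ Finset.range N, c j * (f s * φ j s) := by
      funext s
      rw [hS, Finset.mul_sum]
      exact Finset.sum_congr rfl fun j _ => by ring
    rw [h2, integral_finset_sum _
      (fun j _ => (integrable_mul₂ hf (hφL2 j)).const_mul (c j))]
    exact Finset.sum_congr rfl fun j _ => by
      rw [integral_const_mul]; rw [show ∫ s, f s * φ j s ∂μI = c j from rfl]; ring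
  have hISS : ∫ s, S s * S s ∂μI = ∑ j ∈ Finset.range N, c j ^ 2 := by
    have h2 : (fun s => S s * S s)
        = fun s => ∑ j ∈ Finset.range N, ∑ l ∈ Finset.range N,
            (c j * c l) * (φ j s * φ l s) := by
      funext s
      rw [hS, Finset.sum_mul_sum]
      exact Finset.sum_congr rfl fun j _ =>
        Finset.sum_congr rfl fun l _ => by ring
    rw [h2]
    rw [integral_finset_sum _ (fun j _ => integrable_finset_sum _
      (fun l _ => (integrable_mul₂ (hφL2 j) (hφL2 l)).const_mul _))]
    refine Finset.sum_congr rfl fun j hj => ?_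
    rw [integral_finset_sum _
      (fun l _ => (integrable_mul₂ (hφL2 j) (hφL2 l)).const_mul _)]
    rw [Finset.sum_eq_single j]
    · rw [integral_const_mul, show ∫ s, φ j s * φ j s ∂μI = ip (φ j) (φ j) from rfl,
        hφon]
      simp [sq]
    · intro l _ hl
      rw [integral_const_mul, show ∫ s, φ j s * φ l s ∂μI = ip (φ j) (φ l) from rfl,
        hφon]
      simp [hl.symm]
    · intro hj'; exact absurd hj hj'
  rw [hexp, integral_add h1 hSS, integral_sub hf.integrable_sq (hfS.const_mul 2),
    integral_const_mul, hIfS, hISS]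
  ring

lemma parseval_tendsto (hφL2 : ∀ k, MemLp (φ k) 2 μI)
    (hφon : ∀ j k, ip (φ j) (φ k) = if j = k then 1 else 0)
    (hf : MemLp f 2 μI)
    (hcomp : (∑' k, (ip f (φ k)) ^ 2) = ∫ t, (f t) ^ 2 ∂μI) :
    Tendsto (fun N : ℕ => ∫ s, (f s - ∑ j ∈ Finset.range N,
        ip f (φ j) * φ j s) ^ 2 ∂μI) atTop (nhds 0) := by
  have bessel : ∀ N, ∑ j ∈ Finset.range N, (ip f (φ j)) ^ 2 ≤ ∫ t, (f t) ^ 2 ∂μI := by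
    intro N
    have h := parseval_partial hφL2 hφon hf N
    have h0 : 0 ≤ ∫ s, (f s - ∑ j ∈ Finset.range N, ip f (φ j) * φ j s) ^ 2 ∂μI :=
      integral_nonneg fun s => sq_nonneg _
    linarith
  have hsum : Summable (fun j => (ip f (φ j)) ^ 2) :=
    summable_of_sum_range_le (fun j => sq_nonneg _) bessel
  have hT : Tendsto (fun N : ℕ => ∑ j ∈ Finset.range N, (ip f (φ j)) ^ 2) atTop
      (nhds (∫ t, (f t) ^ 2 ∂μI)) := by
    have := hsum.hasSum.tendsto_sum_nat
    rwa [hcomp] at this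
  have := (tendsto_const_nhds (x := ∫ t, (f t) ^ 2 ∂μI) (f := atTop)).sub hT
  rw [sub_self] at this
  refine this.congr fun N => ?_
  exact (parseval_partial hφL2 hφon hf N).symm

end CoefAux

open CoefAux

set_option maxHeartbeats 4000000 in
/-- Characterization of the coefficient function: in the functional linear model
`E(Y|X)(s) = E Y(s) + ∫ b(s,t)(X(t) − E X(t)) dt`, with PC scores
`ξ_k = ⟨X − E X, φ_k⟩` and coefficients `b_{j,k} = ∬ b (φ_j ⊗ φ_k)`, for every `k` the
function `s ↦ E[ξ_k Y(s)]` equals `κ_k Σ_j b_{j,k} φ_j` in `L²(I)`, and consequently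
`b = Σ_k κ_k⁻¹ E[ξ_k Y] ⊗ φ_k` in `L²(I²)` (both series converging in the respective
`L²` norms). -/
theorem coefficient_characterization {Ω : Type} [MeasurableSpace Ω]
    (P : Measure Ω) [IsProbabilityMeasure P]
    (X Y 𝓔 : Ω → ℝ → ℝ)
    (hXmeas : Measurable (fun p : Ω × ℝ => X p.1 p.2))
    (hYmeas : Measurable (fun p : Ω × ℝ => Y p.1 p.2))
    (hXL2 : ∀ᵐ ω ∂P, MemLp (X ω) 2 μI)
    (hYL2 : ∀ᵐ ω ∂P, MemLp (Y ω) 2 μI)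
    (hEX2 : Integrable (fun ω => ∫ t, (X ω t) ^ 2 ∂μI) P)
    (hEY2 : Integrable (fun ω => ∫ s, (Y ω s) ^ 2 ∂μI) P)
    (EX EY : ℝ → ℝ)
    (hEX : ∀ t, EX t = ∫ ω, X ω t ∂P)
    (hEY : ∀ s, EY s = ∫ ω, Y ω s ∂P)
    (b : ℝ → ℝ → ℝ)
    (hbmeas : Measurable (fun p : ℝ × ℝ => b p.1 p.2))
    (hbL2 : MemLp (fun p : ℝ × ℝ => b p.1 p.2) 2 (μI.prod μI))
    -- the functional linear model `Y = E Y + ∫ b(s,t)(X(t) − E X(t)) dt + 𝓔`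
    (hmodel : ∀ᵐ ω ∂P, ∀ᵐ s ∂μI,
      Y ω s = EY s + (∫ t, b s t * (X ω t - EX t) ∂μI) + 𝓔 ω s)
    -- `E(𝓔 | X) = 0`, expressed through inner products with `L²` test functions
    (h𝓔cond : ∀ f : ℝ → ℝ, Measurable f → MemLp f 2 μI →
      P[fun ω => ip (𝓔 ω) f | MeasurableSpace.comap X inferInstance] =ᵐ[P] 0)
    -- spectral expansion of the covariance of `X`
    (K : ℝ → ℝ → ℝ)
    (hK : ∀ s t, K s t = ∫ ω, (X ω s - EX s) * (X ω t - EX t) ∂P)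
    (κ : ℕ → ℝ) (hκpos : ∀ k, 0 < κ k)
    (φ : ℕ → ℝ → ℝ)
    (hφmeas : ∀ k, Measurable (φ k))
    (hφL2 : ∀ k, MemLp (φ k) 2 μI)
    (hφon : ∀ j k, ip (φ j) (φ k) = if j = k then 1 else 0)
    (hφcomplete : ∀ f : ℝ → ℝ, Measurable f → MemLp f 2 μI →
      (∑' k, (ip f (φ k)) ^ 2) = ∫ t, (f t) ^ 2 ∂μI)
    (heig : ∀ k, ∀ᵐ s ∂μI, (∫ t, K s t * φ k t ∂μI) = κ k * φ k s) :
    (∀ k : ℕ,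
      Tendsto (fun N : ℕ => ∫ s,
          ((∫ ω, ip (fun t => X ω t - EX t) (φ k) * Y ω s ∂P)
            - κ k * ∑ j ∈ Finset.range N,
                (∫ s', (∫ t, b s' t * φ k t ∂μI) * φ j s' ∂μI) * φ j s) ^ 2 ∂μI)
        atTop (nhds 0)) ∧
    Tendsto (fun M : ℕ => ∫ s, ∫ t,
        (b s t - ∑ k ∈ Finset.range M,
            (κ k)⁻¹ * (∫ ω, ip (fun u => X ω u - EX u) (φ k) * Y ω s ∂P) * φ k t) ^ 2
        ∂μI ∂μI)
      atTop (nhds 0) := by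
  -- basic measurability
  have hXm : Measurable X :=
    measurable_pi_lambda X fun t => hXmeas.comp (measurable_id.prodMk measurable_const)
  have hm : MeasurableSpace.comap X inferInstance ≤ (inferInstance : MeasurableSpace Ω) :=
    measurable_iff_comap_le.mp hXm
  have hXtm : ∀ t, Measurable fun ω => X ω t :=
    fun t => hXmeas.comp (measurable_id.prodMk measurable_const)
  have hYtm : ∀ s, Measurable fun ω => Y ω s :=
    fun s => hYmeas.comp (measurable_id.prodMk measurable_const)
  have mEX : Measurable EX := by
    have : EX = fun t => ∫ ω, X ω t ∂P := funext hEX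
    rw [this]
    exact (((hXmeas.comp measurable_swap).stronglyMeasurable).integral_prod_right').measurable
  have mEY : Measurable EY := by
    have : EY = fun s => ∫ ω, Y ω s ∂P := funext hEY
    rw [this]
    exact (((hYmeas.comp measurable_swap).stronglyMeasurable).integral_prod_right').measurable
  -- square integrability on product spaces
  have sqX_int : Integrable (fun p : Ω × ℝ => (X p.1 p.2) ^ 2) (P.prod μI) := by
    refine (integrable_prod_iff (hXmeas.pow_const 2).aestronglyMeasurable).mpr ⟨?_, ?_⟩
    · filter_upwards [hXL2] with ω hω using hω.integrable_sq
    · refine hEX2.congr (ae_of_all _ fun ω => ?_)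
      refine integral_congr_ae (ae_of_all _ fun t => ?_)
      simp [Real.norm_eq_abs, sq_abs]
  have sqY_int : Integrable (fun p : Ω × ℝ => (Y p.1 p.2) ^ 2) (P.prod μI) := by
    refine (integrable_prod_iff (hYmeas.pow_const 2).aestronglyMeasurable).mpr ⟨?_, ?_⟩
    · filter_upwards [hYL2] with ω hω using hω.integrable_sq
    · refine hEY2.congr (ae_of_all _ fun ω => ?_)
      refine integral_congr_ae (ae_of_all _ fun s => ?_)
      simp [Real.norm_eq_abs, sq_abs]
  have hXt : ∀ᵐ t ∂μI, MemLp (fun ω => X ω t) 2 P := by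
    filter_upwards [sqX_int.swap.prod_right_ae] with t ht
    exact (memLp_two_iff_integrable_sq (hXtm t).aestronglyMeasurable).mpr ht
  have hYs : ∀ᵐ s ∂μI, MemLp (fun ω => Y ω s) 2 P := by
    filter_upwards [sqY_int.swap.prod_right_ae] with s hs
    exact (memLp_two_iff_integrable_sq (hYtm s).aestronglyMeasurable).mpr hs
  have intX2 : Integrable (fun t => ∫ ω, (X ω t) ^ 2 ∂P) μI := sqX_int.swap.integral_prod_left
  have intY2 : Integrable (fun s => ∫ ω, (Y ω s) ^ 2 ∂P) μI := sqY_int.swap.integral_prod_left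
  have one_sq : ∫ ω, (1 : ℝ) ^ 2 ∂P = 1 := by simp
  have hEXL2 : MemLp EX 2 μI := by
    refine (memLp_two_iff_integrable_sq mEX.aestronglyMeasurable).mpr ?_
    refine Integrable.mono' intX2 (mEX.pow_const 2).aestronglyMeasurable ?_
    filter_upwards [hXt] with t ht
    have h1 : |∫ ω, X ω t * 1 ∂P| ≤
        Real.sqrt (∫ ω, (X ω t) ^ 2 ∂P) * Real.sqrt (∫ ω, (1:ℝ) ^ 2 ∂P) :=
      integral_mul_le ht (memLp_const 1)
    rw [one_sq, Real.sqrt_one, mul_one] at h1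
    simp only [mul_one] at h1
    rw [Real.norm_eq_abs, abs_of_nonneg (sq_nonneg _), hEX t]
    have h2 : 0 ≤ ∫ ω, (X ω t) ^ 2 ∂P := integral_nonneg fun ω => sq_nonneg _
    nlinarith [Real.sq_sqrt h2, abs_nonneg (∫ ω, X ω t ∂P), le_abs_self (∫ ω, X ω t ∂P),
      neg_abs_le (∫ ω, X ω t ∂P)]
  have hEYL2 : MemLp EY 2 μI := by
    refine (memLp_two_iff_integrable_sq mEY.aestronglyMeasurable).mpr ?_
    refine Integrable.mono' intY2 (mEY.pow_const 2).aestronglyMeasurable ?_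
    filter_upwards [hYs] with s hs
    have h1 : |∫ ω, Y ω s * 1 ∂P| ≤
        Real.sqrt (∫ ω, (Y ω s) ^ 2 ∂P) * Real.sqrt (∫ ω, (1:ℝ) ^ 2 ∂P) :=
      integral_mul_le hs (memLp_const 1)
    rw [one_sq, Real.sqrt_one, mul_one] at h1
    simp only [mul_one] at h1
    rw [Real.norm_eq_abs, abs_of_nonneg (sq_nonneg _), hEY s]
    have h2 : 0 ≤ ∫ ω, (Y ω s) ^ 2 ∂P := integral_nonneg fun ω => sq_nonneg _
    nlinarith [Real.sq_sqrt h2, abs_nonneg (∫ ω, Y ω s ∂P), le_abs_self (∫ ω, Y ω s ∂P),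
      neg_abs_le (∫ ω, Y ω s ∂P)]
  -- centered process
  have mXc : Measurable (fun p : Ω × ℝ => X p.1 p.2 - EX p.2) :=
    hXmeas.sub (mEX.comp measurable_snd)
  have hXcL2 : ∀ᵐ ω ∂P, MemLp (fun t => X ω t - EX t) 2 μI := by
    filter_upwards [hXL2] with ω hω using hω.sub hEXL2
  have hXct : ∀ᵐ t ∂μI, MemLp (fun ω => X ω t - EX t) 2 P := by
    filter_upwards [hXt] with t ht using ht.sub (memLp_const _)
  have hXtint : ∀ᵐ t ∂μI, Integrable (fun ω => X ω t) P := by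
    filter_upwards [hXt] with t ht using ht.integrable one_le_two
  set nX : Ω → ℝ := fun ω => ∫ t, (X ω t - EX t) ^ 2 ∂μI with hnX
  have nX_nonneg : ∀ ω, 0 ≤ nX ω := fun ω => integral_nonneg fun t => sq_nonneg _
  have nX_meas : Measurable nX :=
    ((mXc.pow_const 2).stronglyMeasurable.integral_prod_right').measurable
  have nX_int : Integrable nX P := by
    have hbd : Integrable (fun ω => 2 * (∫ t, (X ω t) ^ 2 ∂μI) + 2 * ∫ t, (EX t) ^ 2 ∂μI) P :=
      (hEX2.const_mul 2).add (integrable_const _)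
    refine Integrable.mono' hbd nX_meas.aestronglyMeasurable ?_
    filter_upwards [hXL2] with ω hω
    rw [Real.norm_eq_abs, abs_of_nonneg (nX_nonneg ω)]
    have h2 : Integrable (fun t => (X ω t - EX t) ^ 2) μI := (hω.sub hEXL2).integrable_sq
    have h3 : Integrable (fun t => 2 * (X ω t) ^ 2 + 2 * (EX t) ^ 2) μI :=
      (hω.integrable_sq.const_mul 2).add (hEXL2.integrable_sq.const_mul 2)
    calc nX ω ≤ ∫ t, 2 * (X ω t) ^ 2 + 2 * (EX t) ^ 2 ∂μI :=
          integral_mono h2 h3 fun t => by nlinarith [sq_nonneg (X ω t + EX t)]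
    _ = 2 * (∫ t, (X ω t) ^ 2 ∂μI) + 2 * ∫ t, (EX t) ^ 2 ∂μI := by
        rw [integral_add (hω.integrable_sq.const_mul 2) (hEXL2.integrable_sq.const_mul 2),
          integral_const_mul, integral_const_mul]
  have sqrtnX_L2 : MemLp (fun ω => Real.sqrt (nX ω)) 2 P := by
    refine (memLp_two_iff_integrable_sq
      (nX_meas.sqrt).aestronglyMeasurable).mpr ?_
    refine nX_int.congr (ae_of_all _ fun ω => ?_)
    simp only []
    rw [Real.sq_sqrt (nX_nonneg ω)]
  set nY : Ω → ℝ := fun ω => ∫ s, (Y ω s) ^ 2 ∂μI with hnY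
  have nY_nonneg : ∀ ω, 0 ≤ nY ω := fun ω => integral_nonneg fun t => sq_nonneg _
  have nY_meas : Measurable nY :=
    ((hYmeas.pow_const 2).stronglyMeasurable.integral_prod_right').measurable
  have sqrtnY_L2 : MemLp (fun ω => Real.sqrt (nY ω)) 2 P := by
    refine (memLp_two_iff_integrable_sq
      (nY_meas.sqrt).aestronglyMeasurable).mpr ?_
    refine hEY2.congr (ae_of_all _ fun ω => ?_)
    show nY ω = Real.sqrt (nY ω) ^ 2
    rw [Real.sq_sqrt (nY_nonneg ω)]
  -- the scores ξ
  set ξ : ℕ → Ω → ℝ := fun k ω => ip (fun t => X ω t - EX t) (φ k) with hξ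
  have φsq : ∀ k, ∫ t, (φ k t) ^ 2 ∂μI = 1 := by
    intro k
    have := hφon k k
    rw [ip_def] at this
    simp only [if_true, eq_self_iff_true] at this
    rw [← this]
    exact integral_congr_ae (ae_of_all _ fun t => by ring)
  have ξmeas : ∀ k, Measurable (ξ k) := by
    intro k
    have : Measurable (fun p : Ω × ℝ => (X p.1 p.2 - EX p.2) * φ k p.2) :=
      mXc.mul ((hφmeas k).comp measurable_snd)
    exact (this.stronglyMeasurable.integral_prod_right').measurable
  have ξabs : ∀ k, ∀ᵐ ω ∂P, |ξ k ω| ≤ Real.sqrt (nX ω) := by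
    intro k
    filter_upwards [hXcL2] with ω hω
    have h1 := integral_mul_le hω (hφL2 k)
    rw [φsq k, Real.sqrt_one, mul_one] at h1
    exact h1
  have ξL2 : ∀ k, MemLp (ξ k) 2 P := by
    intro k
    refine (memLp_two_iff_integrable_sq (ξmeas k).aestronglyMeasurable).mpr ?_
    refine Integrable.mono' nX_int ((ξmeas k).pow_const 2).aestronglyMeasurable ?_
    filter_upwards [ξabs k] with ω hω
    rw [Real.norm_eq_abs, abs_of_nonneg (sq_nonneg _)]
    nlinarith [Real.sq_sqrt (nX_nonneg ω), abs_nonneg (ξ k ω), sq_abs (ξ k ω)]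
  have ξint : ∀ k, Integrable (ξ k) P := fun k => (ξL2 k).integrable one_le_two
  -- mean zero of the scores
  have hξdef : ∀ k ω, ξ k ω = ∫ t, (X ω t - EX t) * φ k t ∂μI := fun _ _ => rfl
  have Eξ : ∀ k, ∫ ω, ξ k ω ∂P = 0 := by
    intro k
    have hmeas : Measurable (fun p : Ω × ℝ => (X p.1 p.2 - EX p.2) * φ k p.2) :=
      mXc.mul ((hφmeas k).comp measurable_snd)
    have J : Integrable (fun p : Ω × ℝ => (X p.1 p.2 - EX p.2) * φ k p.2) (P.prod μI) := by
      refine (integrable_prod_iff hmeas.aestronglyMeasurable).mpr ⟨?_, ?_⟩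
      · filter_upwards [hXcL2] with ω hω using integrable_mul₂ hω (hφL2 k)
      · refine Integrable.mono' (sqrtnX_L2.integrable one_le_two)
          ((hmeas.norm.stronglyMeasurable.integral_prod_right').aestronglyMeasurable) ?_
        filter_upwards [hXcL2] with ω hω
        rw [Real.norm_eq_abs, abs_of_nonneg (integral_nonneg fun t => norm_nonneg _)]
        have h1 := integral_abs_mul_le hω (hφL2 k)
        rw [φsq k, Real.sqrt_one, mul_one] at h1
        calc ∫ t, ‖(X ω t - EX t) * φ k t‖ ∂μI
            = ∫ t, |(X ω t - EX t) * φ k t| ∂μI := by simp [Real.norm_eq_abs, abs_mul]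
        _ ≤ Real.sqrt (nX ω) := h1
    have hswap := integral_integral_swap (f := fun ω t => (X ω t - EX t) * φ k t) J
    calc ∫ ω, ξ k ω ∂P = ∫ ω, ∫ t, (X ω t - EX t) * φ k t ∂μI ∂P := by
          exact integral_congr_ae (ae_of_all _ fun ω => hξdef k ω)
    _ = ∫ t, ∫ ω, (X ω t - EX t) * φ k t ∂P ∂μI := hswap
    _ = 0 := by
        refine (integral_congr_ae ?_).trans (integral_zero _ _)
        filter_upwards [hXtint] with t ht
        rw [integral_mul_const]
        have h0 : ∫ ω, (X ω t - EX t) ∂P = 0 := by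
          rw [integral_sub ht (integrable_const _), integral_const]
          simp [measure_univ, hEX]
        rw [h0, zero_mul]
  -- covariance identity
  have covξ : ∀ k, ∀ᵐ t ∂μI, ∫ ω, ξ k ω * (X ω t - EX t) ∂P = κ k * φ k t := by
    intro k
    filter_upwards [hXct, heig k] with t hXctL2 heigt
    have hmeas : Measurable (fun p : Ω × ℝ =>
        (X p.1 p.2 - EX p.2) * φ k p.2 * (X p.1 t - EX t)) :=
      (mXc.mul ((hφmeas k).comp measurable_snd)).mul
        (((hXtm t).sub measurable_const).comp measurable_fst)
    have J : Integrable (fun p : Ω × ℝ =>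
        (X p.1 p.2 - EX p.2) * φ k p.2 * (X p.1 t - EX t)) (P.prod μI) := by
      refine (integrable_prod_iff hmeas.aestronglyMeasurable).mpr ⟨?_, ?_⟩
      · filter_upwards [hXcL2] with ω hω using (integrable_mul₂ hω (hφL2 k)).mul_const _
      · refine Integrable.mono' ((integrable_mul₂ hXctL2 sqrtnX_L2).abs)
          ((hmeas.norm.stronglyMeasurable.integral_prod_right').aestronglyMeasurable) ?_
        filter_upwards [hXcL2] with ω hω
        rw [Real.norm_eq_abs, abs_of_nonneg (integral_nonneg fun u => norm_nonneg _)]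
        have h1 := integral_abs_mul_le hω (hφL2 k)
        rw [φsq k, Real.sqrt_one, mul_one] at h1
        calc ∫ u, ‖(X ω u - EX u) * φ k u * (X ω t - EX t)‖ ∂μI
            = ∫ u, |(X ω u - EX u) * φ k u| * |X ω t - EX t| ∂μI := by
              simp [Real.norm_eq_abs, abs_mul]
        _ = (∫ u, |(X ω u - EX u) * φ k u| ∂μI) * |X ω t - EX t| := integral_mul_const _ _
        _ ≤ Real.sqrt (nX ω) * |X ω t - EX t| :=
              mul_le_mul_of_nonneg_right h1 (abs_nonneg _)
        _ = |(X ω t - EX t) * Real.sqrt (nX ω)| := by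
              rw [abs_mul, abs_of_nonneg (Real.sqrt_nonneg _)]; ring
    have hswap := integral_integral_swap
      (f := fun ω u => (X ω u - EX u) * φ k u * (X ω t - EX t)) J
    calc ∫ ω, ξ k ω * (X ω t - EX t) ∂P
        = ∫ ω, ∫ u, (X ω u - EX u) * φ k u * (X ω t - EX t) ∂μI ∂P := by
          refine integral_congr_ae (ae_of_all _ fun ω => ?_)
          beta_reduce
          rw [hξdef k ω, ← integral_mul_const]
    _ = ∫ u, ∫ ω, (X ω u - EX u) * φ k u * (X ω t - EX t) ∂P ∂μI := hswap
    _ = ∫ u, K u t * φ k u ∂μI := by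
          refine integral_congr_ae (ae_of_all _ fun u => ?_)
          beta_reduce
          rw [hK u t, ← integral_mul_const]
          exact integral_congr_ae (ae_of_all _ fun ω => by ring)
    _ = ∫ u, K t u * φ k u ∂μI := by
          refine integral_congr_ae (ae_of_all _ fun u => ?_)
          beta_reduce
          have h1 : K u t = K t u := by
            rw [hK u t, hK t u]
            exact integral_congr_ae (ae_of_all _ fun ω => by ring)
          rw [h1]
    _ = κ k * φ k t := heigt
  -- slices of b
  have sqb_int : Integrable (fun p : ℝ × ℝ => (b p.1 p.2) ^ 2) (μI.prod μI) :=
    hbL2.integrable_sq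
  have hbsm : ∀ s, Measurable (b s) :=
    fun s => hbmeas.comp (measurable_const.prodMk measurable_id)
  have hbs : ∀ᵐ s ∂μI, MemLp (b s) 2 μI := by
    filter_upwards [sqb_int.prod_right_ae] with s hs
    exact (memLp_two_iff_integrable_sq (hbsm s).aestronglyMeasurable).mpr hs
  set nB : ℝ → ℝ := fun s => ∫ t, (b s t) ^ 2 ∂μI with hnB
  have nB_nonneg : ∀ s, 0 ≤ nB s := fun s => integral_nonneg fun t => sq_nonneg _
  have nB_int : Integrable nB μI := sqb_int.integral_prod_left
  set Cb : ℝ := ∫ s, nB s ∂μI with hCb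
  have Cb_nonneg : 0 ≤ Cb := integral_nonneg nB_nonneg
  -- the functions g k
  set g : ℕ → ℝ → ℝ := fun k s => ∫ t, b s t * φ k t ∂μI with hg
  have hgdef : ∀ k s, g k s = ∫ t, b s t * φ k t ∂μI := fun _ _ => rfl
  have gmeas : ∀ k, Measurable (g k) := by
    intro k
    have : Measurable (fun p : ℝ × ℝ => b p.1 p.2 * φ k p.2) :=
      hbmeas.mul ((hφmeas k).comp measurable_snd)
    exact (this.stronglyMeasurable.integral_prod_right').measurable
  have gabs : ∀ k, ∀ᵐ s ∂μI, |g k s| ≤ Real.sqrt (nB s) := by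
    intro k
    filter_upwards [hbs] with s hs
    have h1 := integral_mul_le hs (hφL2 k)
    rw [φsq k, Real.sqrt_one, mul_one] at h1
    exact h1
  have gL2 : ∀ k, MemLp (g k) 2 μI := by
    intro k
    refine (memLp_two_iff_integrable_sq (gmeas k).aestronglyMeasurable).mpr ?_
    refine Integrable.mono' nB_int ((gmeas k).pow_const 2).aestronglyMeasurable ?_
    filter_upwards [gabs k] with s hs
    rw [Real.norm_eq_abs, abs_of_nonneg (sq_nonneg _)]
    nlinarith [Real.sq_sqrt (nB_nonneg s), abs_nonneg (g k s), sq_abs (g k s)]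
  have hgip : ∀ k s, ip (b s) (φ k) = g k s := fun k s => rfl
  -- the operator T
  set T : Ω → ℝ → ℝ := fun ω s => ∫ t, b s t * (X ω t - EX t) ∂μI with hT
  have Tmeas : Measurable (fun p : Ω × ℝ => T p.1 p.2) := by
    have : Measurable (fun q : (Ω × ℝ) × ℝ =>
        b q.1.2 q.2 * (X q.1.1 q.2 - EX q.2)) := by
      refine Measurable.mul ?_ ?_
      · exact hbmeas.comp ((measurable_snd.comp measurable_fst).prodMk measurable_snd)
      · exact mXc.comp ((measurable_fst.comp measurable_fst).prodMk measurable_snd)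
    exact (this.stronglyMeasurable.integral_prod_right').measurable
  have Tabs : ∀ᵐ ω ∂P, ∀ᵐ s ∂μI, |T ω s| ≤ Real.sqrt (nB s) * Real.sqrt (nX ω) := by
    filter_upwards [hXcL2] with ω hω
    filter_upwards [hbs] with s hs
    exact integral_mul_le hs hω
  have TL2 : ∀ᵐ ω ∂P, MemLp (T ω) 2 μI := by
    filter_upwards [Tabs] with ω hω
    have mT : Measurable (T ω) := by
      have : Measurable (fun q : ℝ × ℝ => b q.1 q.2 * (X ω q.2 - EX q.2)) :=
        hbmeas.mul ((mXc.comp (measurable_const.prodMk measurable_id)).comp measurable_snd)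
      exact (this.stronglyMeasurable.integral_prod_right').measurable
    refine (memLp_two_iff_integrable_sq mT.aestronglyMeasurable).mpr ?_
    refine Integrable.mono' (nB_int.mul_const (nX ω))
      (mT.pow_const 2).aestronglyMeasurable ?_
    filter_upwards [hω] with s hs
    rw [Real.norm_eq_abs, abs_of_nonneg (sq_nonneg _)]
    nlinarith [Real.sq_sqrt (nB_nonneg s), Real.sq_sqrt (nX_nonneg ω), sq_abs (T ω s),
      abs_nonneg (T ω s), Real.sqrt_nonneg (nB s), Real.sqrt_nonneg (nX ω)]
  have hTdef : ∀ ω s, T ω s = ∫ t, b s t * (X ω t - EX t) ∂μI := fun _ _ => rfl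
  have Tsq : ∀ᵐ ω ∂P, ∫ s, (T ω s) ^ 2 ∂μI ≤ Cb * nX ω := by
    filter_upwards [Tabs, TL2] with ω hω hT2
    have h1 : ∫ s, (T ω s) ^ 2 ∂μI ≤ ∫ s, nB s * nX ω ∂μI := by
      refine integral_mono_ae hT2.integrable_sq (nB_int.mul_const _) ?_
      filter_upwards [hω] with s hs
      nlinarith [Real.sq_sqrt (nB_nonneg s), Real.sq_sqrt (nX_nonneg ω), sq_abs (T ω s),
        abs_nonneg (T ω s), Real.sqrt_nonneg (nB s), Real.sqrt_nonneg (nX ω)]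
    calc ∫ s, (T ω s) ^ 2 ∂μI ≤ ∫ s, nB s * nX ω ∂μI := h1
    _ = Cb * nX ω := integral_mul_const _ _
  -- decomposition of ⟨Y ω, φ j⟩
  have ipY : ∀ j, ∀ᵐ ω ∂P,
      ip (Y ω) (φ j) = ip EY (φ j) + ip (T ω) (φ j) + ip (𝓔 ω) (φ j) := by
    intro j
    filter_upwards [hmodel, hYL2, TL2] with ω hmod hYω hTω
    have hEYφ : Integrable (fun s => EY s * φ j s) μI := integrable_mul₂ hEYL2 (hφL2 j)
    have hTφ : Integrable (fun s => T ω s * φ j s) μI := integrable_mul₂ hTω (hφL2 j)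
    have hYφ : Integrable (fun s => Y ω s * φ j s) μI := integrable_mul₂ hYω (hφL2 j)
    have h𝓔φ : Integrable (fun s => 𝓔 ω s * φ j s) μI := by
      refine ((hYφ.sub hEYφ).sub hTφ).congr ?_
      filter_upwards [hmod] with s hsmod
      show Y ω s * φ j s - EY s * φ j s - T ω s * φ j s = 𝓔 ω s * φ j s
      rw [hsmod, hTdef ω s]; ring
    calc ip (Y ω) (φ j) = ∫ s, Y ω s * φ j s ∂μI := ip_def _ _
    _ = ∫ s, (EY s * φ j s + T ω s * φ j s) + 𝓔 ω s * φ j s ∂μI := by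
        refine integral_congr_ae ?_
        filter_upwards [hmod] with s hsmod
        beta_reduce
        rw [hsmod, hTdef ω s]; ring
    _ = (∫ s, EY s * φ j s + T ω s * φ j s ∂μI) + ∫ s, 𝓔 ω s * φ j s ∂μI :=
        integral_add (hEYφ.add hTφ) h𝓔φ
    _ = ((∫ s, EY s * φ j s ∂μI) + ∫ s, T ω s * φ j s ∂μI) + ∫ s, 𝓔 ω s * φ j s ∂μI := by
        rw [integral_add hEYφ hTφ]
    _ = ip EY (φ j) + ip (T ω) (φ j) + ip (𝓔 ω) (φ j) := by
        rw [ip_def, ip_def, ip_def]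
  -- the errors Z j
  have ipYmeas : ∀ j, Measurable (fun ω => ip (Y ω) (φ j)) := by
    intro j
    have : Measurable (fun p : Ω × ℝ => Y p.1 p.2 * φ j p.2) :=
      hYmeas.mul ((hφmeas j).comp measurable_snd)
    exact (this.stronglyMeasurable.integral_prod_right').measurable
  have ipTmeas : ∀ j, Measurable (fun ω => ip (T ω) (φ j)) := by
    intro j
    have : Measurable (fun p : Ω × ℝ => T p.1 p.2 * φ j p.2) :=
      Tmeas.mul ((hφmeas j).comp measurable_snd)
    exact (this.stronglyMeasurable.integral_prod_right').measurable
  have ipYL2 : ∀ j, MemLp (fun ω => ip (Y ω) (φ j)) 2 P := by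
    intro j
    refine (memLp_two_iff_integrable_sq (ipYmeas j).aestronglyMeasurable).mpr ?_
    refine Integrable.mono' hEY2 ((ipYmeas j).pow_const 2).aestronglyMeasurable ?_
    filter_upwards [hYL2] with ω hω
    rw [Real.norm_eq_abs, abs_of_nonneg (sq_nonneg _)]
    have h1 := integral_mul_le hω (hφL2 j)
    rw [φsq j, Real.sqrt_one, mul_one] at h1
    have h2 : 0 ≤ ∫ s, (Y ω s) ^ 2 ∂μI := integral_nonneg fun s => sq_nonneg _
    have h3 : |ip (Y ω) (φ j)| ≤ Real.sqrt (∫ s, (Y ω s) ^ 2 ∂μI) := h1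
    nlinarith [Real.sq_sqrt h2, abs_nonneg (ip (Y ω) (φ j)), sq_abs (ip (Y ω) (φ j))]
  have ipTL2 : ∀ j, MemLp (fun ω => ip (T ω) (φ j)) 2 P := by
    intro j
    refine (memLp_two_iff_integrable_sq (ipTmeas j).aestronglyMeasurable).mpr ?_
    refine Integrable.mono' (nX_int.const_mul Cb)
      ((ipTmeas j).pow_const 2).aestronglyMeasurable ?_
    filter_upwards [TL2, Tsq] with ω hTω hTsq
    rw [Real.norm_eq_abs, abs_of_nonneg (sq_nonneg _)]
    have h1 := integral_mul_le hTω (hφL2 j)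
    rw [φsq j, Real.sqrt_one, mul_one] at h1
    have h2 : 0 ≤ ∫ s, (T ω s) ^ 2 ∂μI := integral_nonneg fun s => sq_nonneg _
    have h3 : |ip (T ω) (φ j)| ≤ Real.sqrt (∫ s, (T ω s) ^ 2 ∂μI) := h1
    nlinarith [Real.sq_sqrt h2, abs_nonneg (ip (T ω) (φ j)), sq_abs (ip (T ω) (φ j))]
  set Z : ℕ → Ω → ℝ := fun j ω =>
    ip (Y ω) (φ j) - ip EY (φ j) - ip (T ω) (φ j) with hZdefn
  have hZdef : ∀ j ω, Z j ω = ip (Y ω) (φ j) - ip EY (φ j) - ip (T ω) (φ j) :=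
    fun _ _ => rfl
  have Zmeas : ∀ j, Measurable (Z j) :=
    fun j => ((ipYmeas j).sub measurable_const).sub (ipTmeas j)
  have hZae : ∀ j, (fun ω => ip (𝓔 ω) (φ j)) =ᵐ[P] Z j := by
    intro j
    filter_upwards [ipY j] with ω hω
    rw [hZdef, hω]; ring
  have Z2 : ∀ j, MemLp (Z j) 2 P :=
    fun j => ((ipYL2 j).sub (memLp_const _)).sub (ipTL2 j)
  have ZL2 : ∀ j, MemLp (fun ω => ip (𝓔 ω) (φ j)) 2 P :=
    fun j => (Z2 j).ae_eq (hZae j).symm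
  have Zint : ∀ j, Integrable (fun ω => ip (𝓔 ω) (φ j)) P :=
    fun j => (ZL2 j).integrable one_le_two
  -- E[ξ_k Z_j] = 0
  have hEZ : ∀ j, ∫ ω, ip (𝓔 ω) (φ j) ∂P = 0 := by
    intro j
    have h0 := h𝓔cond (φ j) (hφmeas j) (hφL2 j)
    calc ∫ ω, ip (𝓔 ω) (φ j) ∂P
        = ∫ ω, (P[fun ω => ip (𝓔 ω) (φ j)|MeasurableSpace.comap X inferInstance]) ω ∂P :=
          (integral_condExp hm).symm
    _ = 0 := by
        refine (integral_congr_ae ?_).trans (integral_zero _ _)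
        filter_upwards [h0] with ω hω
        simpa using hω
  have XtZ : ∀ j, ∀ᵐ t ∂μI, ∫ ω, (X ω t - EX t) * Z j ω ∂P = 0 := by
    intro j
    filter_upwards [hXt] with t ht
    have hsm : StronglyMeasurable[MeasurableSpace.comap X inferInstance]
        (fun ω => X ω t) := by
      refine Measurable.stronglyMeasurable ?_
      exact (measurable_pi_apply t).comp (measurable_iff_comap_le.mpr le_rfl)
    have hprod : Integrable (fun ω => X ω t * ip (𝓔 ω) (φ j)) P :=
      integrable_mul₂ ht (ZL2 j)
    have hc := condExp_mul_of_stronglyMeasurable_left (μ := P)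
      (m := MeasurableSpace.comap X inferInstance) hsm hprod (Zint j)
    have h0 := h𝓔cond (φ j) (hφmeas j) (hφL2 j)
    have hXtZ : ∫ ω, X ω t * ip (𝓔 ω) (φ j) ∂P = 0 := by
      calc ∫ ω, X ω t * ip (𝓔 ω) (φ j) ∂P
          = ∫ ω, (P[(fun ω => X ω t) * fun ω => ip (𝓔 ω) (φ j)|
              MeasurableSpace.comap X inferInstance]) ω ∂P := (integral_condExp hm).symm
      _ = 0 := by
          refine (integral_congr_ae ?_).trans (integral_zero _ _)
          filter_upwards [hc, h0] with ω h1ω h2ω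
          rw [h1ω]
          simp only [Pi.mul_apply]
          simpa [h2ω] using by rw [h2ω]; ring
    have hmain : ∫ ω, (X ω t - EX t) * ip (𝓔 ω) (φ j) ∂P = 0 := by
      have hsplit : ∫ ω, (X ω t - EX t) * ip (𝓔 ω) (φ j) ∂P
          = (∫ ω, X ω t * ip (𝓔 ω) (φ j) ∂P) - ∫ ω, EX t * ip (𝓔 ω) (φ j) ∂P := by
        rw [← integral_sub hprod ((Zint j).const_mul _)]
        exact integral_congr_ae (ae_of_all _ fun ω => by beta_reduce; ring)
      rw [hsplit, hXtZ, integral_const_mul, hEZ j]; ring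
    calc ∫ ω, (X ω t - EX t) * Z j ω ∂P
        = ∫ ω, (X ω t - EX t) * ip (𝓔 ω) (φ j) ∂P := by
          refine integral_congr_ae ?_
          filter_upwards [hZae j] with ω hω
          rw [← hω]
    _ = 0 := hmain
  have ξZ : ∀ k j, ∫ ω, ξ k ω * ip (𝓔 ω) (φ j) ∂P = 0 := by
    intro k j
    have hmeas : Measurable (fun p : Ω × ℝ =>
        (X p.1 p.2 - EX p.2) * φ k p.2 * Z j p.1) :=
      (mXc.mul ((hφmeas k).comp measurable_snd)).mul ((Zmeas j).comp measurable_fst)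
    have J : Integrable (fun p : Ω × ℝ =>
        (X p.1 p.2 - EX p.2) * φ k p.2 * Z j p.1) (P.prod μI) := by
      refine (integrable_prod_iff hmeas.aestronglyMeasurable).mpr ⟨?_, ?_⟩
      · filter_upwards [hXcL2] with ω hω using (integrable_mul₂ hω (hφL2 k)).mul_const _
      · refine Integrable.mono' ((integrable_mul₂ sqrtnX_L2 (Z2 j)).abs)
          ((hmeas.norm.stronglyMeasurable.integral_prod_right').aestronglyMeasurable) ?_
        filter_upwards [hXcL2] with ω hω
        rw [Real.norm_eq_abs, abs_of_nonneg (integral_nonneg fun t => norm_nonneg _)]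
        have h1 := integral_abs_mul_le hω (hφL2 k)
        rw [φsq k, Real.sqrt_one, mul_one] at h1
        calc ∫ t, ‖(X ω t - EX t) * φ k t * Z j ω‖ ∂μI
            = ∫ t, |(X ω t - EX t) * φ k t| * |Z j ω| ∂μI := by
              simp [Real.norm_eq_abs, abs_mul]
        _ = (∫ t, |(X ω t - EX t) * φ k t| ∂μI) * |Z j ω| := integral_mul_const _ _
        _ ≤ Real.sqrt (nX ω) * |Z j ω| :=
              mul_le_mul_of_nonneg_right h1 (abs_nonneg _)
        _ = |Real.sqrt (nX ω) * Z j ω| := by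
              rw [abs_mul, abs_of_nonneg (Real.sqrt_nonneg _)]
    have hswap := integral_integral_swap
      (f := fun ω t => (X ω t - EX t) * φ k t * Z j ω) J
    calc ∫ ω, ξ k ω * ip (𝓔 ω) (φ j) ∂P
        = ∫ ω, ξ k ω * Z j ω ∂P := by
          refine integral_congr_ae ?_
          filter_upwards [hZae j] with ω hω
          rw [hω]
    _ = ∫ ω, ∫ t, (X ω t - EX t) * φ k t * Z j ω ∂μI ∂P := by
          refine integral_congr_ae (ae_of_all _ fun ω => ?_)
          beta_reduce
          rw [hξdef k ω, ← integral_mul_const]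
    _ = ∫ t, ∫ ω, (X ω t - EX t) * φ k t * Z j ω ∂P ∂μI := hswap
    _ = 0 := by
        refine (integral_congr_ae ?_).trans (integral_zero _ _)
        filter_upwards [XtZ j] with t htz
        have : ∫ ω, (X ω t - EX t) * φ k t * Z j ω ∂P
            = (∫ ω, (X ω t - EX t) * Z j ω ∂P) * φ k t := by
          rw [← integral_mul_const]
          exact integral_congr_ae (ae_of_all _ fun ω => by ring)
        rw [this, htz, zero_mul]
  -- E[ξ_k ⟨T, φ j⟩] = κ k ⟨g k, φ j⟩
  have ξTs : ∀ k, ∀ᵐ s ∂μI, ∫ ω, ξ k ω * T ω s ∂P = κ k * g k s := by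
    intro k
    filter_upwards [hbs] with s hbsL2
    have hmeas : Measurable (fun p : Ω × ℝ =>
        ξ k p.1 * (b s p.2 * (X p.1 p.2 - EX p.2))) :=
      ((ξmeas k).comp measurable_fst).mul
        (((hbsm s).comp measurable_snd).mul mXc)
    have J2 : Integrable (fun p : Ω × ℝ =>
        ξ k p.1 * (b s p.2 * (X p.1 p.2 - EX p.2))) (P.prod μI) := by
      refine (integrable_prod_iff hmeas.aestronglyMeasurable).mpr ⟨?_, ?_⟩
      · filter_upwards [hXcL2] with ω hω using (integrable_mul₂ hbsL2 hω).const_mul _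
      · refine Integrable.mono' ((nX_int.const_mul (Real.sqrt (nB s))).abs)
          ((hmeas.norm.stronglyMeasurable.integral_prod_right').aestronglyMeasurable) ?_
        filter_upwards [hXcL2, ξabs k] with ω hω hξω
        rw [Real.norm_eq_abs, abs_of_nonneg (integral_nonneg fun t => norm_nonneg _)]
        have h1 := integral_abs_mul_le hbsL2 hω
        calc ∫ t, ‖ξ k ω * (b s t * (X ω t - EX t))‖ ∂μI
            = ∫ t, |b s t * (X ω t - EX t)| * |ξ k ω| ∂μI := by
              simp [Real.norm_eq_abs, abs_mul]; ring_nf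
        _ = (∫ t, |b s t * (X ω t - EX t)| ∂μI) * |ξ k ω| := integral_mul_const _ _
        _ ≤ (Real.sqrt (nB s) * Real.sqrt (nX ω)) * Real.sqrt (nX ω) := by
              refine mul_le_mul h1 hξω (abs_nonneg _) ?_
              positivity
        _ = Real.sqrt (nB s) * nX ω := by
              rw [mul_assoc, Real.mul_self_sqrt (nX_nonneg ω)]
        _ ≤ |Real.sqrt (nB s) * nX ω| := le_abs_self _
    have hswap := integral_integral_swap
      (f := fun ω t => ξ k ω * (b s t * (X ω t - EX t))) J2
    calc ∫ ω, ξ k ω * T ω s ∂P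
        = ∫ ω, ∫ t, ξ k ω * (b s t * (X ω t - EX t)) ∂μI ∂P := by
          refine integral_congr_ae (ae_of_all _ fun ω => ?_)
          beta_reduce
          rw [hTdef ω s, ← integral_const_mul]
    _ = ∫ t, ∫ ω, ξ k ω * (b s t * (X ω t - EX t)) ∂P ∂μI := hswap
    _ = ∫ t, b s t * (κ k * φ k t) ∂μI := by
          refine integral_congr_ae ?_
          filter_upwards [covξ k] with t hct
          beta_reduce
          have h2 : ∫ ω, ξ k ω * (b s t * (X ω t - EX t)) ∂P
              = (∫ ω, ξ k ω * (X ω t - EX t) ∂P) * b s t := by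
            rw [← integral_mul_const]
            exact integral_congr_ae (ae_of_all _ fun ω => by ring)
          rw [h2, hct]; ring
    _ = κ k * g k s := by
          rw [hgdef k s, ← integral_const_mul]
          exact integral_congr_ae (ae_of_all _ fun t => by ring)
  have ξT : ∀ k j, ∫ ω, ξ k ω * ip (T ω) (φ j) ∂P = κ k * ip (g k) (φ j) := by
    intro k j
    have hmeas : Measurable (fun p : Ω × ℝ => ξ k p.1 * T p.1 p.2 * φ j p.2) :=
      (((ξmeas k).comp measurable_fst).mul Tmeas).mul ((hφmeas j).comp measurable_snd)
    have J1 : Integrable (fun p : Ω × ℝ => ξ k p.1 * T p.1 p.2 * φ j p.2)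
        (P.prod μI) := by
      refine (integrable_prod_iff hmeas.aestronglyMeasurable).mpr ⟨?_, ?_⟩
      · filter_upwards [TL2] with ω hω
        have := (integrable_mul₂ hω (hφL2 j)).const_mul (ξ k ω)
        exact this.congr (ae_of_all _ fun s => by beta_reduce; ring)
      · refine Integrable.mono' ((nX_int.const_mul (Real.sqrt Cb)).abs)
          ((hmeas.norm.stronglyMeasurable.integral_prod_right').aestronglyMeasurable) ?_
        filter_upwards [TL2, Tsq, ξabs k] with ω hTω hTsq hξω
        rw [Real.norm_eq_abs, abs_of_nonneg (integral_nonneg fun s => norm_nonneg _)]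
        have h1 := integral_abs_mul_le hTω (hφL2 j)
        rw [φsq j, Real.sqrt_one, mul_one] at h1
        have h3 : Real.sqrt (∫ s, (T ω s) ^ 2 ∂μI)
            ≤ Real.sqrt Cb * Real.sqrt (nX ω) := by
          rw [← Real.sqrt_mul Cb_nonneg]
          exact Real.sqrt_le_sqrt hTsq
        calc ∫ s, ‖ξ k ω * T ω s * φ j s‖ ∂μI
            = ∫ s, |T ω s * φ j s| * |ξ k ω| ∂μI := by
              refine integral_congr_ae (ae_of_all _ fun s => ?_)
              simp [Real.norm_eq_abs, abs_mul]; ring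
        _ = (∫ s, |T ω s * φ j s| ∂μI) * |ξ k ω| := integral_mul_const _ _
        _ ≤ (Real.sqrt Cb * Real.sqrt (nX ω)) * Real.sqrt (nX ω) := by
              refine mul_le_mul (h1.trans h3) hξω (abs_nonneg _) ?_
              positivity
        _ = Real.sqrt Cb * nX ω := by
              rw [mul_assoc, Real.mul_self_sqrt (nX_nonneg ω)]
        _ ≤ |Real.sqrt Cb * nX ω| := le_abs_self _
    have hswap := integral_integral_swap
      (f := fun ω s => ξ k ω * T ω s * φ j s) J1
    calc ∫ ω, ξ k ω * ip (T ω) (φ j) ∂P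
        = ∫ ω, ∫ s, ξ k ω * T ω s * φ j s ∂μI ∂P := by
          refine integral_congr_ae (ae_of_all _ fun ω => ?_)
          beta_reduce
          rw [ip_def, ← integral_const_mul]
          exact integral_congr_ae (ae_of_all _ fun s => by ring)
    _ = ∫ s, ∫ ω, ξ k ω * T ω s * φ j s ∂P ∂μI := hswap
    _ = ∫ s, (κ k * g k s) * φ j s ∂μI := by
          refine integral_congr_ae ?_
          filter_upwards [ξTs k] with s hts
          beta_reduce
          have h2 : ∫ ω, ξ k ω * T ω s * φ j s ∂P
              = (∫ ω, ξ k ω * T ω s ∂P) * φ j s := integral_mul_const _ _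
          rw [h2, hts]
    _ = κ k * ip (g k) (φ j) := by
          rw [ip_def, ← integral_const_mul]
          exact integral_congr_ae (ae_of_all _ fun s => by ring)
  -- the cross-covariance function A
  set A : ℕ → ℝ → ℝ := fun k s => ∫ ω, ξ k ω * Y ω s ∂P with hA
  have Ameas : ∀ k, Measurable (A k) := by
    intro k
    have : Measurable (fun p : ℝ × Ω => ξ k p.2 * Y p.2 p.1) :=
      ((ξmeas k).comp measurable_snd).mul (hYmeas.comp measurable_swap)
    exact (this.stronglyMeasurable.integral_prod_right').measurable
  have hAdef : ∀ k s, A k s = ∫ ω, ξ k ω * Y ω s ∂P := fun _ _ => rfl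
  have ξsq_int : ∀ k, Integrable (fun ω => (ξ k ω) ^ 2) P := fun k => (ξL2 k).integrable_sq
  have AL2 : ∀ k, MemLp (A k) 2 μI := by
    intro k
    refine (memLp_two_iff_integrable_sq (Ameas k).aestronglyMeasurable).mpr ?_
    refine Integrable.mono' (intY2.const_mul (∫ ω, (ξ k ω) ^ 2 ∂P))
      ((Ameas k).pow_const 2).aestronglyMeasurable ?_
    filter_upwards [hYs] with s hs
    rw [Real.norm_eq_abs, abs_of_nonneg (sq_nonneg _)]
    have h1 := integral_mul_le (ξL2 k) hs
    have h2 : 0 ≤ ∫ ω, (ξ k ω) ^ 2 ∂P := integral_nonneg fun ω => sq_nonneg _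
    have h3 : 0 ≤ ∫ ω, (Y ω s) ^ 2 ∂P := integral_nonneg fun ω => sq_nonneg _
    have h4 : |A k s| ≤ Real.sqrt (∫ ω, (ξ k ω) ^ 2 ∂P)
        * Real.sqrt (∫ ω, (Y ω s) ^ 2 ∂P) := h1
    nlinarith [Real.sq_sqrt h2, Real.sq_sqrt h3, abs_nonneg (A k s), sq_abs (A k s),
      Real.sqrt_nonneg (∫ ω, (ξ k ω) ^ 2 ∂P), Real.sqrt_nonneg (∫ ω, (Y ω s) ^ 2 ∂P)]
  have ipA : ∀ k j, ip (A k) (φ j) = κ k * ip (g k) (φ j) := by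
    intro k j
    have hmeas : Measurable (fun p : Ω × ℝ => ξ k p.1 * Y p.1 p.2 * φ j p.2) :=
      (((ξmeas k).comp measurable_fst).mul hYmeas).mul ((hφmeas j).comp measurable_snd)
    have J3 : Integrable (fun p : Ω × ℝ => ξ k p.1 * Y p.1 p.2 * φ j p.2)
        (P.prod μI) := by
      refine (integrable_prod_iff hmeas.aestronglyMeasurable).mpr ⟨?_, ?_⟩
      · filter_upwards [hYL2] with ω hω
        have := (integrable_mul₂ hω (hφL2 j)).const_mul (ξ k ω)
        exact this.congr (ae_of_all _ fun s => by beta_reduce; ring)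
      · refine Integrable.mono' ((integrable_mul₂ sqrtnX_L2 sqrtnY_L2).abs)
          ((hmeas.norm.stronglyMeasurable.integral_prod_right').aestronglyMeasurable) ?_
        filter_upwards [hYL2, ξabs k] with ω hω hξω
        rw [Real.norm_eq_abs, abs_of_nonneg (integral_nonneg fun s => norm_nonneg _)]
        have h1 := integral_abs_mul_le hω (hφL2 j)
        rw [φsq j, Real.sqrt_one, mul_one] at h1
        calc ∫ s, ‖ξ k ω * Y ω s * φ j s‖ ∂μI
            = ∫ s, |Y ω s * φ j s| * |ξ k ω| ∂μI := by
              refine integral_congr_ae (ae_of_all _ fun s => ?_)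
              simp [Real.norm_eq_abs, abs_mul]; ring
        _ = (∫ s, |Y ω s * φ j s| ∂μI) * |ξ k ω| := integral_mul_const _ _
        _ ≤ Real.sqrt (nY ω) * Real.sqrt (nX ω) := by
              refine mul_le_mul h1 hξω (abs_nonneg _) (Real.sqrt_nonneg _)
        _ = |Real.sqrt (nX ω) * Real.sqrt (nY ω)| := by
              rw [abs_mul, abs_of_nonneg (Real.sqrt_nonneg _),
                abs_of_nonneg (Real.sqrt_nonneg _)]
              ring
    have hswap := integral_integral_swap
      (f := fun ω s => ξ k ω * Y ω s * φ j s) J3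
    have hξipEY : Integrable (fun ω => ξ k ω * ip EY (φ j)) P := (ξint k).mul_const _
    have hξipT : Integrable (fun ω => ξ k ω * ip (T ω) (φ j)) P :=
      integrable_mul₂ (ξL2 k) (ipTL2 j)
    have hξZ : Integrable (fun ω => ξ k ω * ip (𝓔 ω) (φ j)) P :=
      integrable_mul₂ (ξL2 k) (ZL2 j)
    calc ip (A k) (φ j) = ∫ s, A k s * φ j s ∂μI := ip_def _ _
    _ = ∫ s, ∫ ω, ξ k ω * Y ω s * φ j s ∂P ∂μI := by
          refine integral_congr_ae (ae_of_all _ fun s => ?_)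
          beta_reduce
          rw [hAdef k s, ← integral_mul_const]
    _ = ∫ ω, ∫ s, ξ k ω * Y ω s * φ j s ∂μI ∂P := hswap.symm
    _ = ∫ ω, ξ k ω * ip (Y ω) (φ j) ∂P := by
          refine integral_congr_ae (ae_of_all _ fun ω => ?_)
          beta_reduce
          rw [ip_def, ← integral_const_mul]
          exact integral_congr_ae (ae_of_all _ fun s => by ring)
    _ = ∫ ω, ξ k ω * ip EY (φ j) + (ξ k ω * ip (T ω) (φ j)
          + ξ k ω * ip (𝓔 ω) (φ j)) ∂P := by
          refine integral_congr_ae ?_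
          filter_upwards [ipY j] with ω hω
          beta_reduce
          rw [hω]; ring
    _ = (∫ ω, ξ k ω * ip EY (φ j) ∂P) + ((∫ ω, ξ k ω * ip (T ω) (φ j) ∂P)
          + ∫ ω, ξ k ω * ip (𝓔 ω) (φ j) ∂P) := by
          have h5 : Integrable (fun ω => ξ k ω * ip (T ω) (φ j)
              + ξ k ω * ip (𝓔 ω) (φ j)) P := hξipT.add hξZ
          rw [integral_add hξipEY h5, integral_add hξipT hξZ]
    _ = κ k * ip (g k) (φ j) := by
          rw [integral_mul_const, Eξ k, ξT k j, ξZ k j]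
          ring
  have hAg : ∀ k, A k =ᵐ[μI] fun s => κ k * g k s := by
    intro k
    have hmeas : Measurable (fun s => A k s - κ k * g k s) :=
      (Ameas k).sub ((gmeas k).const_mul _)
    have hL2 : MemLp (fun s => A k s - κ k * g k s) 2 μI :=
      (AL2 k).sub ((gL2 k).const_mul _)
    have hipzero : ∀ j, ip (fun s => A k s - κ k * g k s) (φ j) = 0 := by
      intro j
      have h1 : Integrable (fun s => A k s * φ j s) μI :=
        integrable_mul₂ (AL2 k) (hφL2 j)
      have h2 : Integrable (fun s => (κ k * g k s) * φ j s) μI :=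
        (integrable_mul₂ (gL2 k) (hφL2 j)).const_mul (κ k) |>.congr
          (ae_of_all _ fun s => by beta_reduce; ring)
      calc ip (fun s => A k s - κ k * g k s) (φ j)
          = ∫ s, (A k s * φ j s - (κ k * g k s) * φ j s) ∂μI := by
            rw [ip_def]
            exact integral_congr_ae (ae_of_all _ fun s => by ring)
      _ = (∫ s, A k s * φ j s ∂μI) - ∫ s, (κ k * g k s) * φ j s ∂μI :=
            integral_sub h1 h2
      _ = ip (A k) (φ j) - κ k * ip (g k) (φ j) := by
            rw [ip_def, ip_def, ← integral_const_mul]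
            congr 1
            exact integral_congr_ae (ae_of_all _ fun s => by ring)
      _ = 0 := by rw [ipA k j]; ring
    have hsq : ∫ s, (A k s - κ k * g k s) ^ 2 ∂μI = 0 := by
      rw [← hφcomplete (fun s => A k s - κ k * g k s) hmeas hL2]
      simp [hipzero]
    have h0 : (fun s => (A k s - κ k * g k s) ^ 2) =ᵐ[μI] 0 := by
      refine (integral_eq_zero_iff_of_nonneg ?_ hL2.integrable_sq).mp hsq
      exact fun s => sq_nonneg _
    filter_upwards [h0] with s hs
    have : (A k s - κ k * g k s) ^ 2 = 0 := hs
    have h1 : A k s - κ k * g k s = 0 := by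
      exact pow_eq_zero_iff (two_ne_zero) |>.mp this
    beta_reduce
    linarith
  constructor
  · -- first goal
    intro k
    have hgt := parseval_tendsto hφL2 hφon (gL2 k)
      (hφcomplete (g k) (gmeas k) (gL2 k))
    have h2 := hgt.const_mul ((κ k) ^ 2)
    rw [mul_zero] at h2
    refine h2.congr fun N => ?_
    show (κ k) ^ 2 * ∫ s, (g k s - ∑ j ∈ Finset.range N, ip (g k) (φ j) * φ j s) ^ 2 ∂μI
      = ∫ s, (A k s - κ k * ∑ j ∈ Finset.range N, ip (g k) (φ j) * φ j s) ^ 2 ∂μI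
    rw [← integral_const_mul]
    refine integral_congr_ae ?_
    filter_upwards [hAg k] with s hs
    rw [hs]; ring
  · -- second goal
    have haeAll : ∀ᵐ s ∂μI, (∀ k, A k s = κ k * g k s) ∧ MemLp (b s) 2 μI := by
      have h1 : ∀ᵐ s ∂μI, ∀ k, A k s = κ k * g k s := ae_all_iff.mpr fun k => hAg k
      exact h1.and hbs
    set D : ℕ → ℝ → ℝ := fun M s =>
      ∫ t, (b s t - ∑ k ∈ Finset.range M, g k s * φ k t) ^ 2 ∂μI with hDset
    have hDdef : ∀ M s, D M s
        = ∫ t, (b s t - ∑ k ∈ Finset.range M, g k s * φ k t) ^ 2 ∂μI := fun _ _ => rfl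
    have hnBdef : ∀ s, nB s = ∫ t, (b s t) ^ 2 ∂μI := fun _ => rfl
    have hDmeas : ∀ M, AEStronglyMeasurable (D M) μI := by
      intro M
      have hme : Measurable (fun p : ℝ × ℝ =>
          (b p.1 p.2 - ∑ k ∈ Finset.range M, g k p.1 * φ k p.2) ^ 2) := by
        apply Measurable.pow_const
        apply hbmeas.sub
        apply Finset.measurable_sum
        intro k _
        exact ((gmeas k).comp measurable_fst).mul ((hφmeas k).comp measurable_snd)
      exact ((hme.stronglyMeasurable.integral_prod_right').measurable).aestronglyMeasurable
    have hDnn : ∀ M s, 0 ≤ D M s := fun M s => integral_nonneg fun t => sq_nonneg _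
    have key : ∀ᵐ s ∂μI, ∀ M, D M s
        = nB s - ∑ k ∈ Finset.range M, (g k s) ^ 2 := by
      filter_upwards [hbs] with s hs
      intro M
      have hp := parseval_partial hφL2 hφon hs M
      simp only [hgip] at hp
      rw [hDdef, hnBdef]
      exact hp
    have hDlim : ∀ᵐ s ∂μI, Tendsto (fun M => D M s) atTop (nhds 0) := by
      filter_upwards [hbs] with s hs
      have hp := parseval_tendsto hφL2 hφon hs (hφcomplete (b s) (hbsm s) hs)
      refine hp.congr fun M => ?_
      simp only [hgip]; rfl
    have hbound : ∀ M, ∀ᵐ s ∂μI, ‖D M s‖ ≤ nB s := by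
      intro M
      filter_upwards [key] with s hk
      rw [Real.norm_eq_abs, abs_of_nonneg (hDnn M s), hk M]
      have h2 : 0 ≤ ∑ k ∈ Finset.range M, (g k s) ^ 2 :=
        Finset.sum_nonneg fun k _ => sq_nonneg _
      linarith
    have hDint : Tendsto (fun M => ∫ s, D M s ∂μI) atTop (nhds 0) := by
      have := tendsto_integral_of_dominated_convergence (F := D) (f := fun _ => (0:ℝ))
        nB hDmeas nB_int hbound hDlim
      simpa using this
    refine hDint.congr fun M => ?_
    refine integral_congr_ae ?_
    filter_upwards [haeAll] with s hs
    obtain ⟨hA', _⟩ := hs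
    rw [hDdef]
    refine integral_congr_ae (ae_of_all _ fun t => ?_)
    beta_reduce
    have hsum : ∑ k ∈ Finset.range M, g k s * φ k t
        = ∑ k ∈ Finset.range M, (κ k)⁻¹ * A k s * φ k t :=
      Finset.sum_congr rfl fun k _ => by
        rw [hA' k]
        have hne : κ k ≠ 0 := ne_of_gt (hκpos k)
        field_simp
    rw [hsum]

end
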